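/- arXiv:2312.08326 — 2 statements merged into one kernel-verified Lean document; each statement's English description precedes it below -/
import Mathlib

section
/- Every map in pCh that has the right lifting property with respect to all maps of I also has the right lifting property with respect to all maps of J; that is, Inj(I) ⊆ Inj(J). -/
open CategoryTheory CategoryTheory.Limits
open scoped NNReal ENNReal

noncomputable section

abbrev PersMod : Type 1 := ℝ≥0 ⥤ ModuleCat.{0} ℚ

abbrev pCh : Type 1 := CochainComplex PersMod ℕ

namespace Pers

open Classical in
/-- The pointwise carrier of the interval persistence module `𝕀_{[s,t)}`. -/
def icar (s t : ℝ≥0∞) (u : ℝ≥0) : Submodule ℚ ℚ :=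
  if s ≤ (u : ℝ≥0∞) ∧ (u : ℝ≥0∞) < t then ⊤ else ⊥

lemma icar_le_of_le {s t : ℝ≥0∞} {u v : ℝ≥0} (huv : u ≤ v) (hv : (v : ℝ≥0∞) < t) :
    icar s t u ≤ icar s t v := by
  classical
  unfold icar
  by_cases h1 : s ≤ (u : ℝ≥0∞) ∧ (u : ℝ≥0∞) < t
  · rw [if_pos h1, if_pos ⟨h1.1.trans (ENNReal.coe_le_coe.mpr huv), hv⟩]
  · rw [if_neg h1]; exact bot_le

lemma icar_mono_birth {s s' : ℝ≥0∞} (h : s' ≤ s) (t : ℝ≥0∞) (u : ℝ≥0) :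
    icar s t u ≤ icar s' t u := by
  classical
  unfold icar
  by_cases h1 : s ≤ (u : ℝ≥0∞) ∧ (u : ℝ≥0∞) < t
  · rw [if_pos h1, if_pos ⟨h.trans h1.1, h1.2⟩]
  · rw [if_neg h1]; exact bot_le

/-- The interval persistence module `𝕀_{[s,t)}`. -/
def intervalMod (s t : ℝ≥0∞) : PersMod where
  obj u := ModuleCat.of ℚ (icar s t u)
  map {u v} huv :=
    if hv : (v : ℝ≥0∞) < t then
      ModuleCat.ofHom (Submodule.inclusion (icar_le_of_le (leOfHom huv) hv))
    else 0
  map_id u := by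
    try dsimp only
    by_cases hu : (u : ℝ≥0∞) < t
    · rw [dif_pos hu]
      ext x
      rfl
    · rw [dif_neg hu]
      have hbot : icar s t u = ⊥ := if_neg (fun h => hu h.2)
      haveI h1 : Subsingleton (icar s t u) := by rw [hbot]; infer_instance
      haveI : Subsingleton ↑(ModuleCat.of ℚ ↥(icar s t u)) := h1
      exact (ModuleCat.isZero_of_subsingleton _).eq_of_src _ _
  map_comp {u v w} huv hvw := by
    try dsimp only
    by_cases hw : (w : ℝ≥0∞) < t
    · have hv : (v : ℝ≥0∞) < t :=
        lt_of_le_of_lt (ENNReal.coe_le_coe.mpr (leOfHom hvw)) hw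
      rw [dif_pos hw, dif_pos hw, dif_pos hv]
      ext x
      rfl
    · rw [dif_neg hw, dif_neg hw, Limits.comp_zero]

end Pers

namespace Pers

/-- The inclusion `𝕀_{[a,t)} ⟶ 𝕀_{[b,t)}` of interval modules, for `b ≤ a`. -/
def intervalModIncl (t : ℝ≥0∞) {a b : ℝ≥0∞} (h : b ≤ a) :
    intervalMod a t ⟶ intervalMod b t where
  app u := ModuleCat.ofHom (Submodule.inclusion (icar_mono_birth h t u))
  naturality {u v} huv := by
    dsimp only [intervalMod]
    by_cases hv : (v : ℝ≥0∞) < t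
    · rw [dif_pos hv, dif_pos hv]
      ext x
      rfl
    · rw [dif_neg hv, dif_neg hv, Limits.zero_comp, Limits.comp_zero]

open Classical in
/-- A totalized version of the inclusion of interval modules:
the inclusion when `b ≤ a`, and `0` otherwise. -/
def intervalModHom (t : ℝ≥0∞) (a b : ℝ≥0∞) : intervalMod a t ⟶ intervalMod b t :=
  if h : b ≤ a then intervalModIncl t h else 0

/-- Degree profile of a complex concentrated in degrees `m` (value `c`) and
`m+1` (value `d`); value `⊤` encodes the zero module. -/
def phi (m : ℕ) (c d : ℝ≥0∞) : ℕ → ℝ≥0∞ :=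
  fun n => if n = m then c else if n = m + 1 then d else ⊤

lemma phi_mono {m : ℕ} {c d c' d' : ℝ≥0∞} (hc : c' ≤ c) (hd : d' ≤ d) (n : ℕ) :
    phi m c' d' n ≤ phi m c d n := by
  unfold phi
  split_ifs <;> first | exact hc | exact hd | exact le_rfl

open Classical in
/-- The persistent cochain complex concentrated in degrees `m` and `m + 1`,
with values the 'step' interval modules `𝕀_{[c,∞)}` and `𝕀_{[d,∞)}`, and with
differential the natural inclusion (when `d ≤ c`). -/
def twoStep (m : ℕ) (c d : ℝ≥0∞) : pCh where
  X n := intervalMod (phi m c d n) ⊤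
  d i j :=
    if i = m ∧ j = m + 1 then intervalModHom ⊤ (phi m c d i) (phi m c d j) else 0
  shape i j hij := by
    try dsimp only
    rw [if_neg]
    rintro ⟨rfl, rfl⟩
    exact hij rfl
  d_comp_d' i j k hij hjk := by
    try dsimp only
    by_cases hi : i = m ∧ j = m + 1
    · rw [if_neg (by omega : ¬(j = m ∧ k = m + 1))]
      exact Limits.comp_zero
    · rw [if_neg hi]
      exact Limits.zero_comp

/-- The morphism of two-step complexes induced by inclusions. -/
def twoStepHom (m : ℕ) {c d c' d' : ℝ≥0∞} (hdc : d ≤ c) (hdc' : d' ≤ c')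
    (hc : c' ≤ c) (hd : d' ≤ d) : twoStep m c d ⟶ twoStep m c' d' where
  f n := intervalModIncl ⊤ (phi_mono hc hd n)
  comm' i j hij := by
    dsimp only [twoStep]
    by_cases hi : i = m ∧ j = m + 1
    · rw [if_pos hi, if_pos hi]
      obtain ⟨rfl, rfl⟩ := hi
      have h1 : phi i c d (i + 1) ≤ phi i c d i := by
        simp [phi, Nat.succ_ne_self]
        exact hdc
      have h1' : phi i c' d' (i + 1) ≤ phi i c' d' i := by
        simp [phi, Nat.succ_ne_self]
        exact hdc'
      rw [intervalModHom, dif_pos h1', intervalModHom, dif_pos h1]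
      ext u x
      rfl
    · rw [if_neg hi, if_neg hi, Limits.zero_comp, Limits.comp_zero]

end Pers

namespace Pers

open ZeroObject

/-- The interval sphere `𝕊^k_{[s,t)}` (with `t = ⊤` allowed). -/
def sphere (k : ℕ) (s : ℝ≥0) (t : ℝ≥0∞) : pCh :=
  match k with
  | 0 => (HomologicalComplex.single PersMod (ComplexShape.up ℕ) 0).obj
      (intervalMod (s : ℝ≥0∞) t)
  | m + 1 => twoStep m t (s : ℝ≥0∞)

/-- The persistent disk `𝔻^k_s` (with the convention `𝔻^0_s = 0`). -/
def disk (k : ℕ) (s : ℝ≥0) : pCh :=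
  match k with
  | 0 => 0
  | m + 1 => twoStep m (s : ℝ≥0∞) (s : ℝ≥0∞)

/-- The canonical inclusion `𝕊^k_{[s,t)} ⟶ 𝔻^k_s`. -/
def sphereToDisk (k : ℕ) (s : ℝ≥0) (t : ℝ≥0∞) (h : (s : ℝ≥0∞) ≤ t) :
    sphere k s t ⟶ disk k s :=
  match k with
  | 0 => 0
  | m + 1 => twoStepHom m h le_rfl h le_rfl

/-- The canonical inclusion `𝔻^k_t ⟶ 𝔻^k_s` for `s ≤ t`. -/
def diskToDisk (k : ℕ) (s t : ℝ≥0) (h : s ≤ t) : disk k t ⟶ disk k s :=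
  match k with
  | 0 => 0
  | m + 1 => twoStepHom m le_rfl le_rfl (ENNReal.coe_le_coe.mpr h) (ENNReal.coe_le_coe.mpr h)

/-- The set `I₀` of generating maps `𝕊^k_{[s,t)} ⟶ 𝔻^k_s`, `0 ≤ s < t < ∞`. -/
inductive I0mem : ∀ ⦃A B : pCh⦄, (A ⟶ B) → Prop
  | mk (k : ℕ) (s t : ℝ≥0) (h : s < t) :
      I0mem (sphereToDisk k s (t : ℝ≥0∞) (ENNReal.coe_le_coe.mpr h.le))

/-- The set `I∞` of generating maps `𝕊^k_{[s,∞)} ⟶ 𝔻^k_s`. -/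
inductive IinfMem : ∀ ⦃A B : pCh⦄, (A ⟶ B) → Prop
  | mk (k : ℕ) (s : ℝ≥0) : IinfMem (sphereToDisk k s ⊤ le_top)

/-- The set `I = I₀ ∪ I∞`. -/
def Imem : MorphismProperty pCh := fun _ _ f => I0mem f ∨ IinfMem f

/-- The set `J₀` of maps `𝔻^k_t ⟶ 𝔻^k_s`, `0 ≤ s < t < ∞`. -/
inductive J0mem : ∀ ⦃A B : pCh⦄, (A ⟶ B) → Prop
  | mk (k : ℕ) (s t : ℝ≥0) (h : s < t) : J0mem (diskToDisk k s t h.le)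

/-- The set `J∞` of maps `0 ⟶ 𝔻^k_s`. -/
inductive JinfMem : ∀ ⦃A B : pCh⦄, (A ⟶ B) → Prop
  | mk (k : ℕ) (s : ℝ≥0) : JinfMem (0 : (0 : pCh) ⟶ disk k s)

/-- The set `J = J₀ ∪ J∞`. -/
def Jmem : MorphismProperty pCh := fun _ _ f => J0mem f ∨ JinfMem f

/-- `Inj S`: the class of morphisms with the right lifting property with respect
to every morphism in `S`. -/
def Inj (S : MorphismProperty pCh) : MorphismProperty pCh :=
  fun _ _ f => ∀ ⦃A B : pCh⦄ (i : A ⟶ B), S i → HasLiftingProperty i f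

/-- `Cof S`: the class of morphisms with the left lifting property with respect
to every morphism in `Inj S`. -/
def Cof (S : MorphismProperty pCh) : MorphismProperty pCh :=
  fun _ _ i => ∀ ⦃X Y : pCh⦄ (f : X ⟶ Y), Inj S f → HasLiftingProperty i f

/-- Evaluation of a persistent cochain complex at a time `u`. -/
def evalAt (u : ℝ≥0) : pCh ⥤ CochainComplex (ModuleCat.{0} ℚ) ℕ :=
  ((evaluation ℝ≥0 (ModuleCat.{0} ℚ)).obj u).mapHomologicalComplex (ComplexShape.up ℕ)

/-- The class `W` of pointwise quasi-isomorphisms. -/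
def Wclass : MorphismProperty pCh :=
  fun _ _ f => ∀ u : ℝ≥0, QuasiIso ((evalAt u).map f)

end Pers

namespace Pers

/-- An object of a functor category indexed by `[0,∞)` is tame if there is a finite
set of reals such that structure maps not crossing any of them are isomorphisms. -/
def TameFunctor {C : Type*} [Category C] (F : ℝ≥0 ⥤ C) : Prop :=
  ∃ T : Finset ℝ≥0, ∀ (s u : ℝ≥0) (h : s ≤ u),
    (∀ r ∈ T, ¬(s < r ∧ r ≤ u)) → IsIso (F.map (homOfLE h))

/-- Tameness for a persistent cochain complex: all structure maps away from a finite
set of critical values are isomorphisms (in every degree). -/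
def TamePCh (X : pCh) : Prop :=
  ∃ T : Finset ℝ≥0, ∀ (s u : ℝ≥0) (h : s ≤ u),
    (∀ r ∈ T, ¬(s < r ∧ r ≤ u)) → ∀ k : ℕ, IsIso ((X.X k).map (homOfLE h))

/-- An object `X` of a category is compact if `Hom(X, -)` preserves filtered colimits. -/
def IsCompactObject {C : Type*} [Category C] (X : C) : Prop :=
  ∀ (J : Type) (_ : SmallCategory J) (_ : IsFiltered J),
    Nonempty (PreservesColimitsOfShape J (coyoneda.obj (Opposite.op X)))

/-- A persistence module is locally compact if every point lies in a compact subfunctor. -/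
def LocallyCompactMod (V : PersMod) : Prop :=
  ∀ (r : ℝ≥0) (v : V.obj r), ∃ (U : PersMod) (ι : U ⟶ V),
    Mono ι ∧ IsCompactObject U ∧ v ∈ Set.range (ι.app r)

/-- A persistent cochain complex is locally compact if every element lies in a compact
subobject. -/
def LocallyCompactPCh (X : pCh) : Prop :=
  ∀ (k : ℕ) (r : ℝ≥0) (x : (X.X k).obj r), ∃ (W : pCh) (ι : W ⟶ X),
    Mono ι ∧ IsCompactObject W ∧ x ∈ Set.range ((ι.f k).app r)

/-- A morphism is a retract of another morphism (in the arrow category). -/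
def IsRetractOfArrow {C : Type*} [Category C] {X Y X' Y' : C}
    (f : X ⟶ Y) (g : X' ⟶ Y') : Prop :=
  ∃ (i : Arrow.mk f ⟶ Arrow.mk g) (r : Arrow.mk g ⟶ Arrow.mk f), i ≫ r = 𝟙 (Arrow.mk f)

/-- The axioms of a model structure on `pCh`, given by classes of weak equivalences,
fibrations and cofibrations. -/
structure IsModelStructure (Weq Fib Cofib : MorphismProperty pCh) : Prop where
  /-- two-out-of-three: compositions -/
  weq_comp : ∀ {X Y Z : pCh} (f : X ⟶ Y) (g : Y ⟶ Z), Weq f → Weq g → Weq (f ≫ g)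
  /-- two-out-of-three: right cancellation -/
  weq_of_comp_left : ∀ {X Y Z : pCh} (f : X ⟶ Y) (g : Y ⟶ Z), Weq f → Weq (f ≫ g) → Weq g
  /-- two-out-of-three: left cancellation -/
  weq_of_comp_right : ∀ {X Y Z : pCh} (f : X ⟶ Y) (g : Y ⟶ Z), Weq g → Weq (f ≫ g) → Weq f
  /-- the classes are closed under retracts -/
  weq_retract : ∀ {X Y X' Y' : pCh} (f : X ⟶ Y) (g : X' ⟶ Y'),
    IsRetractOfArrow f g → Weq g → Weq f
  fib_retract : ∀ {X Y X' Y' : pCh} (f : X ⟶ Y) (g : X' ⟶ Y'),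
    IsRetractOfArrow f g → Fib g → Fib f
  cof_retract : ∀ {X Y X' Y' : pCh} (f : X ⟶ Y) (g : X' ⟶ Y'),
    IsRetractOfArrow f g → Cofib g → Cofib f
  /-- lifting of trivial cofibrations against fibrations -/
  lift_triv_cof : ∀ {A B X Y : pCh} (i : A ⟶ B) (p : X ⟶ Y),
    Cofib i → Weq i → Fib p → HasLiftingProperty i p
  /-- lifting of cofibrations against trivial fibrations -/
  lift_triv_fib : ∀ {A B X Y : pCh} (i : A ⟶ B) (p : X ⟶ Y),
    Cofib i → Fib p → Weq p → HasLiftingProperty i p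
  /-- factorization as a trivial cofibration followed by a fibration -/
  fact₁ : ∀ {X Y : pCh} (f : X ⟶ Y), ∃ (Z : pCh) (i : X ⟶ Z) (p : Z ⟶ Y),
    Cofib i ∧ Weq i ∧ Fib p ∧ i ≫ p = f
  /-- factorization as a cofibration followed by a trivial fibration -/
  fact₂ : ∀ {X Y : pCh} (f : X ⟶ Y), ∃ (Z : pCh) (i : X ⟶ Z) (p : Z ⟶ Y),
    Cofib i ∧ Fib p ∧ Weq p ∧ i ≫ p = f

end Pers

namespace Pers

/-- A morphism is a pushout of a coproduct of morphisms in `S`. -/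
def IsPushoutOfCoproductsOf (S : MorphismProperty pCh) : MorphismProperty pCh :=
  fun A B g => ∃ (Γ : Type) (Xs Ys : Γ → pCh) (ι : ∀ γ, Xs γ ⟶ Ys γ),
    (∀ γ, S (ι γ)) ∧ ∃ (a : (∐ Xs) ⟶ A) (b : (∐ Ys) ⟶ B),
      IsPushout (Limits.Sigma.map fun γ => ι γ) a b g

/-- The inclusion functor of the initial segment `Set.Iio b` of a preorder. -/
def iioFunctor {β : Type} [Preorder β] (b : β) : Set.Iio b ⥤ β :=
  Monotone.functor (f := (Subtype.val : Set.Iio b → β)) (fun _ _ h => h)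

/-- The cocone over the restriction of `F` to `Set.Iio b` with apex `F.obj b`. -/
def iioCocone {β : Type} [Preorder β] (F : β ⥤ pCh) (b : β) :
    Cocone (iioFunctor b ⋙ F) where
  pt := F.obj b
  ι :=
    { app := fun x => F.map (homOfLE x.2.le)
      naturality := by
        intro x y g
        dsimp [iioFunctor, Monotone.functor]
        rw [Category.comp_id, ← F.map_comp]
        exact congrArg F.map (Subsingleton.elim _ _) }

/-- A witness that `f : X ⟶ Y` is a transfinite composition of morphisms in `S`:
a well-ordered continuous chain starting at `X`, with colimit `Y`, all whose
successor maps lie in `S`. -/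
structure TransfiniteCompositionWitness (S : MorphismProperty pCh)
    {X Y : pCh} (f : X ⟶ Y) where
  /-- the (well-ordered) indexing type -/
  β : Type
  [lo : LinearOrder β]
  [bot : OrderBot β]
  [succ : SuccOrder β]
  [wf : WellFoundedLT β]
  /-- the chain -/
  F : β ⥤ pCh
  /-- the chain starts at `X` -/
  iso : F.obj ⊥ ≅ X
  /-- the maps to the colimit `Y` -/
  incl : F ⟶ (Functor.const β).obj Y
  /-- `Y` is the colimit of the chain -/
  isColimit : IsColimit (Cocone.mk Y incl)
  /-- each successor map belongs to `S` -/
  succ_mem : ∀ b : β, ¬ IsMax b → S (F.map (homOfLE (Order.le_succ b)))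
  /-- the chain is continuous at every limit element -/
  limit_continuous : ∀ b : β, Order.IsSuccLimit b →
    Nonempty (IsColimit (iioCocone F b))
  /-- the composite of the whole chain is `f` -/
  fac : iso.inv ≫ incl.app ⊥ = f

/-- `f` is a transfinite composition of morphisms in `S`. -/
def IsTransfiniteCompositionOf (S : MorphismProperty pCh) {X Y : pCh}
    (f : X ⟶ Y) : Prop :=
  Nonempty (TransfiniteCompositionWitness S f)

open ZeroObject in
/-- An `I`-cell complex: an object `X` such that `0 ⟶ X` is a transfinite composition
of pushouts of coproducts of maps in `I`. -/
def IsICellComplex (X : pCh) : Prop :=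
  IsTransfiniteCompositionOf (IsPushoutOfCoproductsOf Imem) (0 : (0 : pCh) ⟶ X)

end Pers

/-- The category of copersistent simplicial sets. -/
abbrev CoPersSSet : Type 1 := ℝ≥0ᵒᵖ ⥤ SSet.{0}

namespace Pers

/-- Tameness for a copersistent simplicial set. -/
def TameCo (F : CoPersSSet) : Prop :=
  ∃ T : Finset ℝ≥0, ∀ (s u : ℝ≥0) (h : s ≤ u),
    (∀ r ∈ T, ¬(s < r ∧ r ≤ u)) → IsIso (F.map (homOfLE h).op)

/-- A simplex of a simplicial set is degenerate if it is in the image of a simplex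
of strictly smaller dimension. -/
def IsDegenerate (K : SSet) {n : ℕ}
    (x : K.obj (Opposite.op (SimplexCategory.mk n))) : Prop :=
  ∃ (m : ℕ) (_ : m < n) (g : SimplexCategory.mk n ⟶ SimplexCategory.mk m)
    (y : K.obj (Opposite.op (SimplexCategory.mk m))), K.map g.op y = x

/-- A simplicial set is finite if it has finitely many nondegenerate simplices. -/
def FiniteSSet (K : SSet) : Prop :=
  Finite (Σ n : ℕ, {x : K.obj (Opposite.op (SimplexCategory.mk n)) // ¬ IsDegenerate K x})

end Pers

namespace Pers

open Limits in
lemma isZero_intervalMod_top (t : ℝ≥0∞) : IsZero (intervalMod ⊤ t) := by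
  refine Functor.isZero _ (fun u => ?_)
  have h1 : Subsingleton (icar ⊤ t u) := by
    rw [icar, if_neg]
    · infer_instance
    · rintro ⟨h, -⟩
      exact ENNReal.coe_ne_top (top_le_iff.mp h)
  haveI : Subsingleton ↑(ModuleCat.of ℚ ↥(icar ⊤ t u)) := h1
  exact (ModuleCat.isZero_of_subsingleton (ModuleCat.of ℚ ↥(icar ⊤ t u)) :
    Limits.IsZero ((intervalMod ⊤ t).obj u))

lemma phi_eq_self (m : ℕ) (c d : ℝ≥0∞) : phi m c d m = c := if_pos rfl

lemma phi_eq_succ (m : ℕ) (c d : ℝ≥0∞) : phi m c d (m + 1) = d := by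
  rw [phi, if_neg (by omega), if_pos rfl]

lemma phi_eq_top (m : ℕ) (c d : ℝ≥0∞) {n : ℕ} (h1 : n ≠ m) (h2 : n ≠ m + 1) :
    phi m c d n = ⊤ := by
  rw [phi, if_neg h1, if_neg h2]

open Limits in
lemma isZero_twoStep_X (m : ℕ) (c d : ℝ≥0∞) {n : ℕ} (h : phi m c d n = ⊤) :
    IsZero ((twoStep m c d).X n) := by
  show IsZero (intervalMod (phi m c d n) ⊤)
  rw [h]
  exact isZero_intervalMod_top ⊤

lemma intervalModHom_eq (t : ℝ≥0∞) {a b : ℝ≥0∞} (h : b ≤ a) :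
    intervalModHom t a b = intervalModIncl t h := dif_pos h

lemma intervalModHom_eq_zero (t : ℝ≥0∞) {a b : ℝ≥0∞} (h : ¬ b ≤ a) :
    intervalModHom t a b = 0 := dif_neg h

lemma intervalModIncl_comp (t : ℝ≥0∞) {a b c : ℝ≥0∞} (h1 : b ≤ a) (h2 : c ≤ b) :
    intervalModIncl t h1 ≫ intervalModIncl t h2 = intervalModIncl t (h2.trans h1) := by
  ext u x
  rfl

lemma intervalModIncl_self (t : ℝ≥0∞) (a : ℝ≥0∞) :
    intervalModIncl t (le_refl a) = 𝟙 (intervalMod a t) := by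
  ext u x
  rfl

lemma intervalModHom_comp (t : ℝ≥0∞) {a b c : ℝ≥0∞} (h1 : b ≤ a) (h2 : c ≤ b) :
    intervalModHom t a b ≫ intervalModHom t b c = intervalModHom t a c := by
  rw [intervalModHom_eq t h1, intervalModHom_eq t h2, intervalModHom_eq t (h2.trans h1),
    intervalModIncl_comp]

lemma intervalModHom_self (t : ℝ≥0∞) (a : ℝ≥0∞) :
    intervalModHom t a a = 𝟙 (intervalMod a t) := by
  rw [intervalModHom_eq t (le_refl a), intervalModIncl_self]

lemma twoStep_d (m : ℕ) (c d : ℝ≥0∞) :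
    (twoStep m c d).d m (m + 1) = intervalModHom ⊤ (phi m c d m) (phi m c d (m + 1)) :=
  if_pos ⟨rfl, rfl⟩

lemma twoStep_d_eq_zero (m : ℕ) (c d : ℝ≥0∞) {i j : ℕ} (h : ¬ (i = m ∧ j = m + 1)) :
    (twoStep m c d).d i j = 0 := if_neg h

lemma twoStepHom_f_eq (m : ℕ) {c d c' d' : ℝ≥0∞} (hdc : d ≤ c) (hdc' : d' ≤ c')
    (hc : c' ≤ c) (hd : d' ≤ d) (n : ℕ) :
    (twoStepHom m hdc hdc' hc hd).f n = intervalModHom ⊤ (phi m c d n) (phi m c' d' n) :=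
  (intervalModHom_eq ⊤ (phi_mono hc hd n)).symm

open Limits in
/-- The "shift" morphism `twoStep (m+1) c d ⟶ twoStep m c' d'` given in each degree by
the totalized interval module map. -/
def shiftHom (m : ℕ) (c d c' d' : ℝ≥0∞) : twoStep (m + 1) c d ⟶ twoStep m c' d' where
  f n := intervalModHom ⊤ (phi (m + 1) c d n) (phi m c' d' n)
  comm' i j hij := by
    have hj : j = i + 1 := hij.symm
    subst hj
    by_cases h1 : i = m + 1 ∨ i = m + 2
    · exact (isZero_twoStep_X m c' d' (phi_eq_top m c' d' (by omega) (by omega))).eq_of_tgt _ _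
    · exact (isZero_twoStep_X (m + 1) c d
        (phi_eq_top (m + 1) c d (by omega) (by omega))).eq_of_src _ _

lemma shiftHom_f (m : ℕ) (c d c' d' : ℝ≥0∞) (n : ℕ) :
    (shiftHom m c d c' d').f n = intervalModHom ⊤ (phi (m + 1) c d n) (phi m c' d' n) := rfl

open Limits in
lemma hlp_of_isZero {A B X Y : pCh} (hA : IsZero A) (hB : IsZero B)
    (i : A ⟶ B) (f : X ⟶ Y) : HasLiftingProperty i f := by
  constructor
  intro u v sq
  exact CommSq.HasLift.mk' ⟨0, hA.eq_of_src _ _, hB.eq_of_src _ _⟩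

open Limits in
lemma isZero_twoStep_top (m : ℕ) : IsZero (twoStep m ⊤ ⊤) := by
  rw [IsZero.iff_id_eq_zero]
  apply HomologicalComplex.hom_ext
  intro n
  refine (isZero_twoStep_X m ⊤ ⊤ ?_).eq_of_src _ _
  unfold phi
  split_ifs <;> rfl

open Limits in
/-- Key transfer lemma: lifting against the sphere inclusion in dimension `m+2`
gives lifting against `twoStep m c c ⟶ twoStep m c s`. -/
lemma key_lift (m : ℕ) (s : ℝ≥0) (c : ℝ≥0∞) (hsc : (s : ℝ≥0∞) < c)
    {X Y : pCh} (f : X ⟶ Y)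
    (H : HasLiftingProperty (twoStepHom (m + 1) hsc.le le_rfl hsc.le le_rfl :
        twoStep (m + 1) c (s : ℝ≥0∞) ⟶ twoStep (m + 1) (s : ℝ≥0∞) (s : ℝ≥0∞)) f) :
    HasLiftingProperty (twoStepHom m le_rfl hsc.le le_rfl hsc.le :
        twoStep m c c ⟶ twoStep m c (s : ℝ≥0∞)) f := by
  -- phi computations
  have e1 : phi (m + 1) c (s : ℝ≥0∞) (m + 1) = c := phi_eq_self _ _ _
  have e2 : phi (m + 1) (s : ℝ≥0∞) (s : ℝ≥0∞) (m + 1) = (s : ℝ≥0∞) := phi_eq_self _ _ _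
  have e3 : phi m c c (m + 1) = c := phi_eq_succ _ _ _
  have e4 : phi m c (s : ℝ≥0∞) (m + 1) = (s : ℝ≥0∞) := phi_eq_succ _ _ _
  have e5 : phi m c (s : ℝ≥0∞) m = c := phi_eq_self _ _ _
  have e6 : phi m c c m = c := phi_eq_self _ _ _
  have e7 : phi (m + 1) c (s : ℝ≥0∞) (m + 1 + 1) = (s : ℝ≥0∞) := phi_eq_succ _ _ _
  have e8 : phi (m + 1) (s : ℝ≥0∞) (s : ℝ≥0∞) (m + 1 + 1) = (s : ℝ≥0∞) := phi_eq_succ _ _ _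
  -- inequalities among phi values
  have A1 : phi m c c (m + 1) ≤ phi (m + 1) c (s : ℝ≥0∞) (m + 1) := by rw [e3, e1]
  have A2 : phi m c (s : ℝ≥0∞) (m + 1) ≤ phi m c c (m + 1) := by rw [e4, e3]; exact hsc.le
  have A3 : phi (m + 1) (s : ℝ≥0∞) (s : ℝ≥0∞) (m + 1) ≤ phi (m + 1) c (s : ℝ≥0∞) (m + 1) := by
    rw [e2, e1]; exact hsc.le
  have A4 : phi m c (s : ℝ≥0∞) (m + 1) ≤ phi (m + 1) (s : ℝ≥0∞) (s : ℝ≥0∞) (m + 1) := by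
    rw [e4, e2]
  have A4' : phi (m + 1) (s : ℝ≥0∞) (s : ℝ≥0∞) (m + 1) ≤ phi m c (s : ℝ≥0∞) (m + 1) := by
    rw [e4, e2]
  have A5 : phi m c c m ≤ phi m c (s : ℝ≥0∞) m := by rw [e5, e6]
  have A6 : phi m c (s : ℝ≥0∞) m ≤ phi m c c m := by rw [e5, e6]
  have A7 : phi m c c (m + 1) ≤ phi m c c m := by rw [e3, e6]
  have A8 : phi (m + 1) c (s : ℝ≥0∞) (m + 1) ≤ phi m c (s : ℝ≥0∞) m := by rw [e1, e5]
  have A9 : phi m c (s : ℝ≥0∞) (m + 1) ≤ phi m c (s : ℝ≥0∞) m := by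
    rw [e4, e5]; exact hsc.le
  have A10 : phi (m + 1) (s : ℝ≥0∞) (s : ℝ≥0∞) (m + 1 + 1) ≤
      phi (m + 1) (s : ℝ≥0∞) (s : ℝ≥0∞) (m + 1) := by rw [e2, e8]
  have A11 : phi (m + 1) c (s : ℝ≥0∞) (m + 1 + 1) ≤ phi m c (s : ℝ≥0∞) (m + 1) := by
    rw [e7, e4]
  have A12 : phi (m + 1) (s : ℝ≥0∞) (s : ℝ≥0∞) (m + 1 + 1) ≤
      phi (m + 1) c (s : ℝ≥0∞) (m + 1 + 1) := by rw [e7, e8]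
  have A13 : phi (m + 1) c (s : ℝ≥0∞) (m + 1) ≤ phi m c c (m + 1) := by rw [e1, e3]
  -- zero objects
  have ZS : ∀ {n : ℕ}, n ≠ m + 1 → n ≠ m + 1 + 1 →
      IsZero ((twoStep (m + 1) c (s : ℝ≥0∞)).X n) :=
    fun {n} h1 h2 => isZero_twoStep_X _ _ _ (phi_eq_top _ _ _ h1 h2)
  have ZB : ∀ {n : ℕ}, n ≠ m → n ≠ m + 1 → IsZero ((twoStep m c (s : ℝ≥0∞)).X n) :=
    fun {n} h1 h2 => isZero_twoStep_X _ _ _ (phi_eq_top _ _ _ h1 h2)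
  have ZA : ∀ {n : ℕ}, n ≠ m → n ≠ m + 1 → IsZero ((twoStep m c c).X n) :=
    fun {n} h1 h2 => isZero_twoStep_X _ _ _ (phi_eq_top _ _ _ h1 h2)
  have ZD : ∀ {n : ℕ}, n ≠ m + 1 → n ≠ m + 1 + 1 →
      IsZero ((twoStep (m + 1) (s : ℝ≥0∞) (s : ℝ≥0∞)).X n) :=
    fun {n} h1 h2 => isZero_twoStep_X _ _ _ (phi_eq_top _ _ _ h1 h2)
  have E1 : shiftHom m c (s : ℝ≥0∞) c c ≫ twoStepHom m le_rfl hsc.le le_rfl hsc.le =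
      (twoStepHom (m + 1) hsc.le le_rfl hsc.le le_rfl :
        twoStep (m + 1) c (s : ℝ≥0∞) ⟶ twoStep (m + 1) (s : ℝ≥0∞) (s : ℝ≥0∞)) ≫
      shiftHom m (s : ℝ≥0∞) (s : ℝ≥0∞) c (s : ℝ≥0∞) := by
    apply HomologicalComplex.hom_ext
    intro n
    by_cases hn : n = m + 1
    · subst hn
      erw [HomologicalComplex.comp_f, HomologicalComplex.comp_f,
        shiftHom_f, shiftHom_f, twoStepHom_f_eq, twoStepHom_f_eq,
        intervalModHom_comp ⊤ A1 A2, intervalModHom_comp ⊤ A3 A4]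
    · by_cases hn2 : n = m + 1 + 1
      · subst hn2
        exact (ZB (by omega) (by omega)).eq_of_tgt _ _
      · exact (ZS hn hn2).eq_of_src _ _
  constructor
  intro u v sq
  have sq' : CommSq (shiftHom m c (s : ℝ≥0∞) c c ≫ u)
      (twoStepHom (m + 1) hsc.le le_rfl hsc.le le_rfl :
        twoStep (m + 1) c (s : ℝ≥0∞) ⟶ twoStep (m + 1) (s : ℝ≥0∞) (s : ℝ≥0∞)) f
      (shiftHom m (s : ℝ≥0∞) (s : ℝ≥0∞) c (s : ℝ≥0∞) ≫ v) := by
    constructor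
    rw [Category.assoc, sq.w, ← Category.assoc, E1, Category.assoc]
  obtain ⟨⟨lft⟩⟩ := H.sq_hasLift sq'
  obtain ⟨l, hl1, hl2⟩ := lft
  have hl1' : ∀ n, (twoStepHom (m + 1) hsc.le le_rfl hsc.le le_rfl :
      twoStep (m + 1) c (s : ℝ≥0∞) ⟶ twoStep (m + 1) (s : ℝ≥0∞) (s : ℝ≥0∞)).f n ≫ l.f n =
      (shiftHom m c (s : ℝ≥0∞) c c).f n ≫ u.f n := fun n => by
    have h := congrArg (fun φ => HomologicalComplex.Hom.f φ n) hl1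
    simpa using h
  have hl2' : ∀ n, l.f n ≫ f.f n =
      (shiftHom m (s : ℝ≥0∞) (s : ℝ≥0∞) c (s : ℝ≥0∞)).f n ≫ v.f n := fun n => by
    have h := congrArg (fun φ => HomologicalComplex.Hom.f φ n) hl2
    simpa using h
  have hl_top : (twoStepHom (m + 1) hsc.le le_rfl hsc.le le_rfl :
      twoStep (m + 1) c (s : ℝ≥0∞) ⟶ twoStep (m + 1) (s : ℝ≥0∞) (s : ℝ≥0∞)).f (m + 1 + 1) ≫
      l.f (m + 1 + 1) = 0 := by
    rw [hl1' (m + 1 + 1),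
      show (shiftHom m c (s : ℝ≥0∞) c c).f (m + 1 + 1) = 0 from
        (ZA (by omega) (by omega)).eq_of_tgt _ _, zero_comp]
  have hq_m : intervalModHom ⊤ (phi m c (s : ℝ≥0∞) m)
      (phi (m + 1) (s : ℝ≥0∞) (s : ℝ≥0∞) m) = 0 := (ZD (by omega) (by omega)).eq_of_tgt _ _
  have hp_m1 : intervalModHom ⊤ (phi m c (s : ℝ≥0∞) (m + 1)) (phi m c c (m + 1)) = 0 := by
    refine intervalModHom_eq_zero ⊤ ?_
    rw [e3, e4]
    exact hsc.not_ge
  -- the key auxiliary identity coming from the lift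
  have key1 : intervalModHom ⊤ (phi m c (s : ℝ≥0∞) m) (phi m c c (m + 1)) ≫ u.f (m + 1)
      = intervalModHom ⊤ (phi m c (s : ℝ≥0∞) m)
          (phi (m + 1) (s : ℝ≥0∞) (s : ℝ≥0∞) (m + 1)) ≫ l.f (m + 1) := by
    erw [← intervalModHom_comp ⊤ A8 A1, ← intervalModHom_comp ⊤ A8 A3,
      Category.assoc, Category.assoc]
    congr 1
    erw [← twoStepHom_f_eq (m + 1) hsc.le le_rfl hsc.le le_rfl (m + 1), hl1' (m + 1),
      shiftHom_f]
    rfl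
  -- construct the lift
  refine CommSq.HasLift.mk' ⟨⟨fun n =>
      intervalModHom ⊤ (phi m c (s : ℝ≥0∞) n) (phi m c c n) ≫ u.f n +
      intervalModHom ⊤ (phi m c (s : ℝ≥0∞) n) (phi (m + 1) (s : ℝ≥0∞) (s : ℝ≥0∞) n) ≫ l.f n,
      ?_⟩, ?_, ?_⟩
  · -- chain map condition
    intro i j hij
    have hj : j = i + 1 := hij.symm
    subst hj
    by_cases him : i = m
    · subst him
      erw [hq_m, hp_m1, zero_comp, zero_comp, add_zero, zero_add,
        Category.assoc, HomologicalComplex.Hom.comm u i (i + 1), ← Category.assoc,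
        twoStep_d i c c, intervalModHom_comp ⊤ A5 A7,
        twoStep_d i c (s : ℝ≥0∞), ← Category.assoc,
        intervalModHom_comp ⊤ A9 A4']
      exact key1
    · by_cases him1 : i = m + 1
      · subst him1
        erw [hp_m1, zero_comp, zero_add,
          twoStep_d_eq_zero m c (s : ℝ≥0∞) (by omega), zero_comp,
          Category.assoc, HomologicalComplex.Hom.comm l (m + 1) (m + 1 + 1),
          ← Category.assoc, twoStep_d (m + 1) (s : ℝ≥0∞) (s : ℝ≥0∞),
          intervalModHom_comp ⊤ A4' A10, ← intervalModHom_comp ⊤ A11 A12,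
          Category.assoc, ← twoStepHom_f_eq (m + 1) hsc.le le_rfl hsc.le le_rfl (m + 1 + 1),
          hl_top, comp_zero]
      · exact (ZB him him1).eq_of_src _ _
  · -- fac_left : a ≫ L = u
    apply HomologicalComplex.hom_ext
    intro n
    rw [HomologicalComplex.comp_f]
    by_cases hn : n = m
    · subst hn
      dsimp only
      erw [hq_m, zero_comp, add_zero, twoStepHom_f_eq, ← Category.assoc,
        intervalModHom_comp ⊤ A6 A5, intervalModHom_self]
      exact Category.id_comp _
    · by_cases hn1 : n = m + 1
      · subst hn1
        dsimp only
        erw [hp_m1, zero_comp, zero_add, twoStepHom_f_eq, ← Category.assoc,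
          intervalModHom_comp ⊤ A2 A4', ← intervalModHom_comp ⊤ A13 A3,
          Category.assoc, ← twoStepHom_f_eq (m + 1) hsc.le le_rfl hsc.le le_rfl (m + 1),
          hl1' (m + 1), shiftHom_f, ← Category.assoc,
          intervalModHom_comp ⊤ A13 A1, intervalModHom_self]
        exact Category.id_comp _
      · exact (ZA hn hn1).eq_of_src _ _
  · -- fac_right : L ≫ f = v
    apply HomologicalComplex.hom_ext
    intro n
    rw [HomologicalComplex.comp_f]
    by_cases hn : n = m
    · subst hn
      dsimp only
      have sqm : u.f n ≫ f.f n = (twoStepHom n le_rfl hsc.le le_rfl hsc.le :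
          twoStep n c c ⟶ twoStep n c (s : ℝ≥0∞)).f n ≫ v.f n := by
        have h := congrArg (fun φ => HomologicalComplex.Hom.f φ n) sq.w
        simpa using h
      erw [hq_m, zero_comp, add_zero, Category.assoc, sqm, twoStepHom_f_eq,
        ← Category.assoc, intervalModHom_comp ⊤ A5 A6, intervalModHom_self]
      exact Category.id_comp _
    · by_cases hn1 : n = m + 1
      · subst hn1
        dsimp only
        erw [hp_m1, zero_comp, zero_add, Category.assoc, hl2' (m + 1), shiftHom_f,
          ← Category.assoc, intervalModHom_comp ⊤ A4' A4, intervalModHom_self]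
        exact Category.id_comp _
      · exact (ZB hn hn1).eq_of_src _ _

/-- Every map with the right lifting property with respect to all
maps of `I` also has the right lifting property with respect to all maps of `J`;
that is, `Inj(I) ⊆ Inj(J)`. -/
theorem inj_I_subset_inj_J {X Y : pCh} (f : X ⟶ Y) (hf : Inj Imem f) :
    Inj Jmem f := by
  intro A B i hi
  rcases (hi : J0mem i ∨ JinfMem i) with h | h
  · cases h with
    | mk k s t hst =>
      cases k with
      | zero => exact hlp_of_isZero (Limits.isZero_zero pCh) (Limits.isZero_zero pCh) _ f
      | succ m =>
        have hco : ((s : ℝ≥0∞)) < (t : ℝ≥0∞) := ENNReal.coe_lt_coe.mpr hst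
        have hb : HasLiftingProperty (twoStepHom m hco.le le_rfl hco.le le_rfl :
            twoStep m (t : ℝ≥0∞) (s : ℝ≥0∞) ⟶ twoStep m (s : ℝ≥0∞) (s : ℝ≥0∞)) f :=
          hf _ (Or.inl (I0mem.mk (m + 1) s t hst))
        have hkey : HasLiftingProperty (twoStepHom m le_rfl hco.le le_rfl hco.le :
            twoStep m (t : ℝ≥0∞) (t : ℝ≥0∞) ⟶ twoStep m (t : ℝ≥0∞) (s : ℝ≥0∞)) f :=
          key_lift m s (t : ℝ≥0∞) hco f (hf _ (Or.inl (I0mem.mk (m + 1 + 1) s t hst)))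
        have hfact : diskToDisk (m + 1) s t hst.le =
            (twoStepHom m le_rfl hco.le le_rfl hco.le :
              twoStep m (t : ℝ≥0∞) (t : ℝ≥0∞) ⟶ twoStep m (t : ℝ≥0∞) (s : ℝ≥0∞)) ≫
            twoStepHom m hco.le le_rfl hco.le le_rfl := by
          apply HomologicalComplex.hom_ext
          intro n
          erw [HomologicalComplex.comp_f,
            show (diskToDisk (m + 1) s t hst.le).f n =
              intervalModHom ⊤ (phi m (t : ℝ≥0∞) (t : ℝ≥0∞) n)
                (phi m (s : ℝ≥0∞) (s : ℝ≥0∞) n) from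
                twoStepHom_f_eq m le_rfl le_rfl hco.le hco.le n,
            twoStepHom_f_eq, twoStepHom_f_eq,
            intervalModHom_comp ⊤ (phi_mono le_rfl hco.le n) (phi_mono hco.le le_rfl n)]
        rw [hfact]
        haveI := hkey
        haveI := hb
        exact @HasLiftingProperty.of_comp_left _ _ _ _ _ _ _ _ _ _ hkey hb
  · cases h with
    | mk k s =>
      cases k with
      | zero => exact hlp_of_isZero (Limits.isZero_zero pCh) (Limits.isZero_zero pCh) _ f
      | succ m =>
        have hco : ((s : ℝ≥0∞)) < ⊤ := ENNReal.coe_lt_top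
        have hb : HasLiftingProperty (twoStepHom m hco.le le_rfl hco.le le_rfl :
            twoStep m ⊤ (s : ℝ≥0∞) ⟶ twoStep m (s : ℝ≥0∞) (s : ℝ≥0∞)) f :=
          hf _ (Or.inr (IinfMem.mk (m + 1) s))
        have hkey : HasLiftingProperty (twoStepHom m le_rfl hco.le le_rfl hco.le :
            twoStep m ⊤ ⊤ ⟶ twoStep m ⊤ (s : ℝ≥0∞)) f :=
          key_lift m s ⊤ hco f (hf _ (Or.inr (IinfMem.mk (m + 1 + 1) s)))
        haveI := hkey
        haveI := hb
        have hcomp : HasLiftingProperty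
            ((twoStepHom m le_rfl hco.le le_rfl hco.le :
              twoStep m ⊤ ⊤ ⟶ twoStep m ⊤ (s : ℝ≥0∞)) ≫
              twoStepHom m hco.le le_rfl hco.le le_rfl) f := inferInstance
        refine @HasLiftingProperty.of_arrow_iso_left _ _ _ _ _ _ _ _ _ _
          (Arrow.isoMk ((isZero_twoStep_top m).iso (Limits.isZero_zero pCh))
            (Iso.refl (twoStep m (s : ℝ≥0∞) (s : ℝ≥0∞)))
            ((isZero_twoStep_top m).eq_of_src _ _)) f hcomp


end Pers
end
end

section
/- A persistence module V (an object of pVec) is a compact object of pVec if and only if V is tame and of finite type, i.e. V(u) is a finite-dimensional ℚ-vector space for every u ≥ 0. -/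
open CategoryTheory CategoryTheory.Limits
open scoped NNReal ENNReal

noncomputable section

namespace Pers

/-! ### Thin-category helpers -/

lemma pm_hom_congr (V : PersMod) {a b : ℝ≥0} (f g : a ⟶ b) : V.map f = V.map g := by
  congr 1
  exact Subsingleton.elim f g

lemma pm_comp₂ (V : PersMod) {a b c : ℝ≥0} (f : a ⟶ b) (g : b ⟶ c) (h : a ⟶ c) :
    V.map f ≫ V.map g = V.map h := by
  rw [← V.map_comp]
  exact pm_hom_congr V _ _

lemma pm_comp_eq (V : PersMod) {a b c : ℝ≥0} (h1 : a ≤ b) (h2 : b ≤ c) (h3 : a ≤ c) :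
    V.map (homOfLE h1) ≫ V.map (homOfLE h2) = V.map (homOfLE h3) := by
  rw [← V.map_comp]
  exact pm_hom_congr V _ _

lemma pm_map_map (V : PersMod) {a b c : ℝ≥0} (h1 : a ≤ b) (h2 : b ≤ c) (h3 : a ≤ c)
    (x : V.obj a) : V.map (homOfLE h2) (V.map (homOfLE h1) x) = V.map (homOfLE h3) x := by
  have := congrArg (fun (f : V.obj a ⟶ V.obj c) => f x) (pm_comp_eq V h1 h2 h3)
  simpa using this

lemma pm_map_self (V : PersMod) {a : ℝ≥0} (h : a ≤ a) (x : V.obj a) :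
    V.map (homOfLE h) x = x := by
  rw [pm_hom_congr V (homOfLE h) (𝟙 a), V.map_id]
  rfl

/-! ### The `crit` function -/

/-- The largest element of `insert 0 T` that is `≤ u`. -/
def crit (T : Finset ℝ≥0) (u : ℝ≥0) : ℝ≥0 :=
  ((insert 0 T).filter (· ≤ u)).max' ⟨0, Finset.mem_filter.2 ⟨Finset.mem_insert_self _ _, by simp⟩⟩

lemma crit_spec (T : Finset ℝ≥0) (u : ℝ≥0) : crit T u ∈ (insert 0 T).filter (· ≤ u) :=
  Finset.max'_mem ((insert 0 T).filter (· ≤ u)) _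

lemma crit_le (T : Finset ℝ≥0) (u : ℝ≥0) : crit T u ≤ u :=
  (Finset.mem_filter.1 (crit_spec T u)).2

lemma crit_mem (T : Finset ℝ≥0) (u : ℝ≥0) : crit T u ∈ insert 0 T :=
  (Finset.mem_filter.1 (crit_spec T u)).1

lemma le_crit {T : Finset ℝ≥0} {t u : ℝ≥0} (h1 : t ∈ insert 0 T) (h2 : t ≤ u) :
    t ≤ crit T u :=
  Finset.le_max' ((insert 0 T).filter (· ≤ u)) t (Finset.mem_filter.2 ⟨h1, h2⟩)

lemma crit_mono (T : Finset ℝ≥0) {u v : ℝ≥0} (h : u ≤ v) : crit T u ≤ crit T v :=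
  le_crit (crit_mem T u) ((crit_le T u).trans h)

lemma crit_monoT {T T' : Finset ℝ≥0} (h : T ⊆ T') (u : ℝ≥0) : crit T u ≤ crit T' u :=
  le_crit (Finset.insert_subset_insert _ h (crit_mem T u)) (crit_le T u)

lemma crit_of_mem {T : Finset ℝ≥0} {u : ℝ≥0} (h : u ∈ insert 0 T) : crit T u = u :=
  le_antisymm (crit_le T u) (le_crit h le_rfl)

/-! ### The tame approximation diagram -/

/-- The tame approximation of `V` at a finite set `T`. -/
def tameApprox (V : PersMod) (T : Finset ℝ≥0) : PersMod where
  obj u := V.obj (crit T u)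
  map {u v} f := V.map (homOfLE (crit_mono T (leOfHom f)))
  map_id u := by
    rw [pm_hom_congr V _ (𝟙 (crit T u))]
    exact V.map_id _
  map_comp {u v w} f g := by
    rw [← V.map_comp]
    exact pm_hom_congr V _ _

/-- The canonical map `tameApprox V T ⟶ V`. -/
def tameι (V : PersMod) (T : Finset ℝ≥0) : tameApprox V T ⟶ V where
  app u := V.map (homOfLE (crit_le T u))
  naturality {u v} f := by
    dsimp only [tameApprox]
    rw [← V.map_comp, ← V.map_comp]
    exact pm_hom_congr V _ _

/-- The filtered diagram of tame approximations of `V`. -/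
def tameDiagram (V : PersMod) : Finset ℝ≥0 ⥤ PersMod where
  obj T := tameApprox V T
  map {T T'} f :=
    { app := fun u => V.map (homOfLE (crit_monoT (leOfHom f) u))
      naturality := fun {u v} g => by
        dsimp only [tameApprox]
        rw [← V.map_comp, ← V.map_comp]
        exact pm_hom_congr V _ _ }
  map_id T := by
    apply NatTrans.ext; funext u
    show V.map _ = 𝟙 (V.obj (crit T u))
    rw [pm_hom_congr V _ (𝟙 (crit T u))]
    exact V.map_id _
  map_comp {T T' T''} f g := by
    apply NatTrans.ext; funext u
    show V.map _ = V.map _ ≫ V.map _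
    rw [← V.map_comp]
    exact pm_hom_congr V _ _

/-- The cocone over the tame approximation diagram with apex `V`. -/
def tameCocone (V : PersMod) : Cocone (tameDiagram V) where
  pt := V
  ι :=
    { app := fun T => tameι V T
      naturality := fun {T T'} f => by
        apply NatTrans.ext; funext u
        show V.map _ ≫ V.map _ = V.map _ ≫ 𝟙 _
        rw [Category.comp_id, ← V.map_comp]
        exact pm_hom_congr V _ _ }

/-- The tame cocone is a colimit. -/
def tameCoconeIsColimit (V : PersMod) : IsColimit (tameCocone V) := by
  refine evaluationJointlyReflectsColimits _ (fun u => ?_)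
  letI : ReflectsColimitsOfShape (Finset ℝ≥0) (forget (ModuleCat ℚ)) :=
    reflectsColimitsOfShape_of_reflectsIsomorphisms
  refine isColimitOfReflects (forget (ModuleCat ℚ)) ?_
  refine Types.FilteredColimit.isColimitOf _ _ ?_ ?_
  · intro x
    have hm : u ∈ insert 0 ({u} : Finset ℝ≥0) := Finset.mem_insert_of_mem (Finset.mem_singleton_self u)
    refine ⟨{u}, V.map (homOfLE (le_crit hm le_rfl)) x, ?_⟩
    exact (pm_map_map V _ _ le_rfl x).trans (pm_map_self V _ x) |>.symm
  · intro i j xi xj hx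
    set k : Finset ℝ≥0 := (i ∪ j) ∪ {u} with hk
    have hm : u ∈ insert 0 k := Finset.mem_insert_of_mem
      (Finset.mem_union_right _ (Finset.mem_singleton_self u))
    have hik : i ≤ k := le_sup_left.trans le_sup_left
    have hjk : j ≤ k := le_sup_right.trans le_sup_left
    refine ⟨k, homOfLE hik, homOfLE hjk, ?_⟩
    show V.map (homOfLE (crit_monoT hik u)) xi = V.map (homOfLE (crit_monoT hjk u)) xj
    have hx' : V.map (homOfLE (crit_le i u)) xi = V.map (homOfLE (crit_le j u)) xj := hx
    rw [← pm_map_map V (crit_le i u) (le_crit hm le_rfl) (crit_monoT hik u) xi,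
      ← pm_map_map V (crit_le j u) (le_crit hm le_rfl) (crit_monoT hjk u) xj, hx']

lemma tame_of_isCompact (V : PersMod) (h : IsCompactObject V) : TameFunctor V := by
  obtain ⟨pres⟩ := h (Finset ℝ≥0) inferInstance inferInstance
  haveI := pres
  have hco : IsColimit ((coyoneda.obj (Opposite.op V)).mapCocone (tameCocone V)) :=
    isColimitOfPreserves _ (tameCoconeIsColimit V)
  obtain ⟨T, g, hg⟩ := Types.jointly_surjective _ hco (𝟙 V)
  have hg' : g ≫ tameι V T = 𝟙 V := hg
  refine ⟨T, fun s u hsu hT => ?_⟩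
  have hc1 : crit T u ≤ s := by
    rcases Finset.mem_insert.1 (crit_mem T u) with h0 | hmem
    · rw [h0]; exact zero_le
    · by_contra hlt
      push_neg at hlt
      exact hT _ hmem ⟨hlt, crit_le T u⟩
  refine ⟨⟨g.app u ≫ V.map (homOfLE hc1), ?_, ?_⟩⟩
  · have hnat : V.map (homOfLE hsu) ≫ g.app u
        = g.app s ≫ (tameApprox V T).map (homOfLE hsu) := g.naturality (homOfLE hsu)
    erw [← Category.assoc, hnat, Category.assoc]
    show g.app s ≫ V.map (homOfLE (crit_mono T hsu)) ≫ V.map (homOfLE hc1) = 𝟙 _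
    erw [pm_comp₂ V _ _ (homOfLE (crit_le T s))]
    exact congrArg (fun (α : V ⟶ V) => α.app s) hg'
  · erw [Category.assoc, pm_comp₂ V _ _ (homOfLE (crit_le T u))]
    exact congrArg (fun (α : V ⟶ V) => α.app u) hg'

/-! ### The finitely generated subfunctor diagram -/

/-- Generating set at time `u` coming from a finite set of (time, vector) pairs. -/
def genSet (V : PersMod) (S : Finset (Σ r : ℝ≥0, V.obj r)) (u : ℝ≥0) : Set (V.obj u) :=
  {x | ∃ p ∈ S, ∃ h : p.1 ≤ u, x = V.map (homOfLE h) p.2}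

def genSub (V : PersMod) (S : Finset (Σ r : ℝ≥0, V.obj r)) (u : ℝ≥0) :
    Submodule ℚ (V.obj u) :=
  Submodule.span ℚ (genSet V S u)

lemma genSub_mapsTo (V : PersMod) (S : Finset (Σ r : ℝ≥0, V.obj r)) {u v : ℝ≥0} (h : u ≤ v) :
    ∀ x ∈ genSub V S u, V.map (homOfLE h) x ∈ genSub V S v := by
  intro x hx
  have hle : Submodule.map (V.map (homOfLE h)).hom (genSub V S u) ≤ genSub V S v := by
    rw [genSub, Submodule.map_span_le]
    rintro y ⟨p, hp, hpu, rfl⟩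
    exact Submodule.subset_span ⟨p, hp, hpu.trans h, pm_map_map V hpu h (hpu.trans h) p.2⟩
  exact hle ⟨x, hx, rfl⟩

lemma genSub_mono (V : PersMod) {S S' : Finset (Σ r : ℝ≥0, V.obj r)} (h : S ⊆ S') (u : ℝ≥0) :
    genSub V S u ≤ genSub V S' u := by
  apply Submodule.span_mono
  rintro x ⟨p, hp, hpu, rfl⟩
  exact ⟨p, h hp, hpu, rfl⟩

/-- The subfunctor of `V` generated by a finite set of (time, vector) pairs. -/
def genMod (V : PersMod) (S : Finset (Σ r : ℝ≥0, V.obj r)) : PersMod where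
  obj u := ModuleCat.of ℚ (genSub V S u)
  map {u v} f := ModuleCat.ofHom (LinearMap.restrict (V.map (homOfLE (leOfHom f))).hom (genSub_mapsTo V S (leOfHom f)))
  map_id u := by
    ext ⟨x, hx⟩
    show V.map (homOfLE _) x = x
    exact pm_map_self V le_rfl x
  map_comp {u v w} f g := by
    ext ⟨x, hx⟩
    show V.map (homOfLE _) x = V.map (homOfLE _) (V.map (homOfLE _) x)
    exact (pm_map_map V _ _ _ x).symm

/-- The inclusion of the generated subfunctor. -/
def genι (V : PersMod) (S : Finset (Σ r : ℝ≥0, V.obj r)) : genMod V S ⟶ V where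
  app u := ModuleCat.ofHom (genSub V S u).subtype
  naturality {u v} f := by
    ext ⟨x, hx⟩
    rfl

/-- The filtered diagram of finitely generated subfunctors of `V`. -/
def genDiagram (V : PersMod) : Finset (Σ r : ℝ≥0, V.obj r) ⥤ PersMod where
  obj S := genMod V S
  map {S S'} f :=
    { app := fun u => ModuleCat.ofHom (Submodule.inclusion (genSub_mono V (leOfHom f) u))
      naturality := fun {u v} g => by
        ext ⟨x, hx⟩
        rfl }
  map_id S := by
    apply NatTrans.ext; funext u
    ext ⟨x, hx⟩
    rfl
  map_comp {S S' S''} f g := by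
    apply NatTrans.ext; funext u
    ext ⟨x, hx⟩
    rfl

/-- The cocone over the subfunctor diagram with apex `V`. -/
def genCocone (V : PersMod) : Cocone (genDiagram V) where
  pt := V
  ι :=
    { app := fun S => genι V S
      naturality := fun {S S'} f => by
        apply NatTrans.ext; funext u
        ext ⟨x, hx⟩
        rfl }

instance (V : PersMod) : IsDirected (Finset (Σ r : ℝ≥0, V.obj r)) (· ≤ ·) := by
  classical
  exact ⟨fun a b => ⟨a ∪ b, Finset.subset_union_left, Finset.subset_union_right⟩⟩

/-- The subfunctor cocone is a colimit. -/
def genCoconeIsColimit (V : PersMod) : IsColimit (genCocone V) := by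
  classical
  refine evaluationJointlyReflectsColimits _ (fun u => ?_)
  letI : ReflectsColimitsOfShape (Finset (Σ r : ℝ≥0, V.obj r)) (forget (ModuleCat ℚ)) :=
    reflectsColimitsOfShape_of_reflectsIsomorphisms
  refine isColimitOfReflects (forget (ModuleCat ℚ)) ?_
  refine Types.FilteredColimit.isColimitOf _ _ ?_ ?_
  · intro x
    have hxm : x ∈ genSub V {⟨u, x⟩} u := Submodule.subset_span
      ⟨⟨u, x⟩, Finset.mem_singleton_self _, le_rfl, (pm_map_self V le_rfl x).symm⟩
    refine ⟨({⟨u, x⟩} : Finset (Σ r : ℝ≥0, V.obj r)), ?_, ?_⟩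
    · exact (⟨x, hxm⟩ : genSub V {⟨u, x⟩} u)
    · rfl
  · intro i j xi xj hx
    refine ⟨i ∪ j, homOfLE Finset.subset_union_left, homOfLE Finset.subset_union_right, ?_⟩
    apply Subtype.ext
    exact hx

lemma finiteDimensional_of_isCompact (V : PersMod) (h : IsCompactObject V) (u : ℝ≥0) :
    FiniteDimensional ℚ (V.obj u) := by
  classical
  obtain ⟨pres⟩ := h (Finset (Σ r : ℝ≥0, V.obj r)) inferInstance inferInstance
  haveI := pres
  have hco : IsColimit ((coyoneda.obj (Opposite.op V)).mapCocone (genCocone V)) :=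
    isColimitOfPreserves _ (genCoconeIsColimit V)
  obtain ⟨S, g, hg⟩ := Types.jointly_surjective _ hco (𝟙 V)
  have hg' : g ≫ genι V S = 𝟙 V := hg
  have hspan : genSub V S u = ⊤ := by
    rw [Submodule.eq_top_iff']
    intro x
    have hx : (genι V S).app u (g.app u x) = x :=
      congrArg (fun (α : V ⟶ V) => α.app u x) hg'
    rw [← hx]
    exact (show genSub V S u from g.app u x).2
  have hfin : (genSet V S u).Finite := by
    apply Set.Finite.subset (S.finite_toSet.image
      (fun p => if h : p.1 ≤ u then V.map (homOfLE h) p.2 else 0))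
    rintro x ⟨p, hp, hpu, rfl⟩
    refine ⟨p, hp, ?_⟩
    show (if h : p.1 ≤ u then V.map (homOfLE h) p.2 else 0) = V.map (homOfLE hpu) p.2
    rw [dif_pos hpu]
  have : Module.Finite ℚ (V.obj u) := by
    rw [Module.finite_def, ← hspan]
    exact Submodule.fg_def.2 ⟨genSet V S u, hfin, rfl⟩
  exact this

/-! ### Combination lemmas over a filtered category -/

section Filtered

variable {J : Type} [SmallCategory J] [IsFiltered J]

lemma obj_sup (L : List (J → Prop))
    (hstab : ∀ χ ∈ L, ∀ {k k' : J}, (k ⟶ k') → χ k → χ k')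
    (hex : ∀ χ ∈ L, ∃ k, χ k) : ∃ k, ∀ χ ∈ L, χ k := by
  induction L with
  | nil => exact ⟨(IsFiltered.nonempty (C := J)).some, by simp⟩
  | cons χ L ih =>
    obtain ⟨k₁, h₁⟩ := ih (fun χ' h => hstab χ' (List.mem_cons_of_mem _ h))
      (fun χ' h => hex χ' (List.mem_cons_of_mem _ h))
    obtain ⟨k₂, h₂⟩ := hex χ (List.mem_cons_self)
    refine ⟨IsFiltered.max k₁ k₂, ?_⟩
    intro χ' hχ'
    rcases List.mem_cons.1 hχ' with rfl | hm
    · exact hstab χ' hχ' (IsFiltered.rightToMax k₁ k₂) h₂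
    · exact hstab χ' hχ' (IsFiltered.leftToMax k₁ k₂) (h₁ χ' hm)

lemma hom_sup (j : J) (L : List (∀ k : J, (j ⟶ k) → Prop))
    (hstab : ∀ χ ∈ L, ∀ {k k' : J} (f : j ⟶ k) (g : k ⟶ k'), χ k f → χ k' (f ≫ g))
    (hex : ∀ χ ∈ L, ∃ k f, χ k f) : ∃ (k : J) (f : j ⟶ k), ∀ χ ∈ L, χ k f := by
  induction L with
  | nil => exact ⟨j, 𝟙 j, by simp⟩
  | cons χ L ih =>
    obtain ⟨k₁, f₁, h₁⟩ := ih (fun χ' h => hstab χ' (List.mem_cons_of_mem _ h))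
      (fun χ' h => hex χ' (List.mem_cons_of_mem _ h))
    obtain ⟨k₂, f₂, h₂⟩ := hex χ (List.mem_cons_self)
    refine ⟨IsFiltered.coeq (f₁ ≫ IsFiltered.leftToMax k₁ k₂) (f₂ ≫ IsFiltered.rightToMax k₁ k₂),
      (f₁ ≫ IsFiltered.leftToMax k₁ k₂) ≫
        IsFiltered.coeqHom (f₁ ≫ IsFiltered.leftToMax k₁ k₂) (f₂ ≫ IsFiltered.rightToMax k₁ k₂),
      ?_⟩
    intro χ' hχ'
    rcases List.mem_cons.1 hχ' with rfl | hm
    · rw [IsFiltered.coeq_condition]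
      rw [Category.assoc]
      exact hstab χ' hχ' f₂ _ h₂
    · rw [Category.assoc]
      exact hstab χ' hχ' f₁ _ (h₁ χ' hm)

variable {K : J ⥤ PersMod} {c : Cocone K}

omit [IsFiltered J] in
lemma K_comp_app (K : J ⥤ PersMod) {i j k : J} (f : i ⟶ j) (g : j ⟶ k) (t : ℝ≥0)
    (x : (K.obj i).obj t) :
    (K.map (f ≫ g)).app t x = (K.map g).app t ((K.map f).app t x) := by
  rw [K.map_comp]
  rfl

omit [IsFiltered J] in
lemma K_comp_post (K : J ⥤ PersMod) {A : ModuleCat.{0} ℚ} {t : ℝ≥0} {i k k' : J}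
    {a b : A ⟶ (K.obj i).obj t} (f : i ⟶ k) (g : k ⟶ k')
    (hab : a ≫ (K.map f).app t = b ≫ (K.map f).app t) :
    a ≫ (K.map (f ≫ g)).app t = b ≫ (K.map (f ≫ g)).app t := by
  rw [K.map_comp, NatTrans.comp_app, ← Category.assoc, ← Category.assoc, hab]

omit [IsFiltered J] in
lemma cocone_w_app (c : Cocone K) {k k' : J} (f : k ⟶ k') (t : ℝ≥0) (y : (K.obj k).obj t) :
    (c.ι.app k').app t ((K.map f).app t y) = (c.ι.app k).app t y := by
  conv_rhs => rw [← c.w f]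
  rfl

/-- The cocone of types obtained by evaluating at `t` and forgetting. -/
def ptCocone (c : Cocone K) (t : ℝ≥0) :
    Cocone ((K ⋙ (evaluation ℝ≥0 (ModuleCat.{0} ℚ)).obj t) ⋙ forget (ModuleCat ℚ)) :=
  (forget (ModuleCat ℚ)).mapCocone (((evaluation ℝ≥0 (ModuleCat.{0} ℚ)).obj t).mapCocone c)

/-- The evaluated cocone is a colimit of types. -/
noncomputable def ptIsColimit (hc : IsColimit c) (t : ℝ≥0) : IsColimit (ptCocone c t) :=
  isColimitOfPreserves _ (isColimitOfPreserves _ hc)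

lemma elt_exists_rep (hc : IsColimit c) (t : ℝ≥0) (x : c.pt.obj t) :
    ∃ (j : J) (y : (K.obj j).obj t), (c.ι.app j).app t y = x :=
  Types.jointly_surjective _ (ptIsColimit hc t) x

lemma elt_eventually_eq (hc : IsColimit c) (j : J) (t : ℝ≥0) (x y : (K.obj j).obj t)
    (h : (c.ι.app j).app t x = (c.ι.app j).app t y) :
    ∃ (k : J) (f : j ⟶ k), (K.map f).app t x = (K.map f).app t y := by
  have h' : (ptCocone c t).ι.app j x = (ptCocone c t).ι.app j y := h
  rw [Types.FilteredColimit.isColimit_eq_iff _ (ptIsColimit hc t)] at h'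
  obtain ⟨k, f, g, hfg⟩ := h'
  refine ⟨IsFiltered.coeq f g, f ≫ IsFiltered.coeqHom f g, ?_⟩
  have hfg' : (K.map f).app t x = (K.map g).app t y := hfg
  calc (K.map (f ≫ IsFiltered.coeqHom f g)).app t x
      = (K.map (IsFiltered.coeqHom f g)).app t ((K.map f).app t x) := K_comp_app K f _ t x
    _ = (K.map (IsFiltered.coeqHom f g)).app t ((K.map g).app t y) := by rw [hfg']
    _ = (K.map (g ≫ IsFiltered.coeqHom f g)).app t y := (K_comp_app K g _ t y).symm
    _ = (K.map (f ≫ IsFiltered.coeqHom f g)).app t y := by rw [← IsFiltered.coeq_condition]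

lemma lm_eventually_eq (hc : IsColimit c) (j : J) (t : ℝ≥0) (M : ModuleCat.{0} ℚ)
    [Module.Finite ℚ M] (a b : M ⟶ (K.obj j).obj t)
    (h : a ≫ (c.ι.app j).app t = b ≫ (c.ι.app j).app t) :
    ∃ (k : J) (f : j ⟶ k), a ≫ (K.map f).app t = b ≫ (K.map f).app t := by
  obtain ⟨s, hs⟩ := Module.finite_def.1 ‹Module.Finite ℚ M›
  have hstab : ∀ χ ∈ (s.toList.map (fun x => fun k (f : j ⟶ k) =>
      (K.map f).app t (a x) = (K.map f).app t (b x))),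
      ∀ {k k' : J} (f : j ⟶ k) (g : k ⟶ k'), χ k f → χ k' (f ≫ g) := by
    intro χ hχ
    obtain ⟨x, _, rfl⟩ := List.mem_map.1 hχ
    intro k k' f g hk
    rw [K_comp_app K f g t (a x), K_comp_app K f g t (b x), hk]
  have hex : ∀ χ ∈ (s.toList.map (fun x => fun k (f : j ⟶ k) =>
      (K.map f).app t (a x) = (K.map f).app t (b x))), ∃ k f, χ k f := by
    intro χ hχ
    obtain ⟨x, _, rfl⟩ := List.mem_map.1 hχ
    exact elt_eventually_eq hc j t (a x) (b x) (ConcreteCategory.congr_hom h x)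
  obtain ⟨k, f, hall⟩ := hom_sup j _ hstab hex
  refine ⟨k, f, ?_⟩
  have hstop : Submodule.span ℚ (s : Set M) = ⊤ := hs
  refine ModuleCat.hom_ext (LinearMap.ext_on hstop (fun x hx => ?_))
  exact hall _ (List.mem_map_of_mem (Finset.mem_toList.2 hx))

end Filtered

/-! ### Extension and extensionality along `crit` -/

lemma crit_iso (V : PersMod) (T : Finset ℝ≥0)
    (hT : ∀ (s u : ℝ≥0) (h : s ≤ u), (∀ r ∈ T, ¬(s < r ∧ r ≤ u)) →
      IsIso (V.map (homOfLE h))) (u : ℝ≥0) :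
    IsIso (V.map (homOfLE (crit_le T u))) :=
  hT _ _ _ (fun r hr hc =>
    absurd (le_crit (Finset.mem_insert_of_mem hr) hc.2) (not_le.2 hc.1))

lemma ext_at_crit (V W : PersMod) (T : Finset ℝ≥0)
    (hiso : ∀ u, IsIso (V.map (homOfLE (crit_le T u))))
    (g g' : V ⟶ W) (h : ∀ t ∈ insert 0 T, g.app t = g'.app t) : g = g' := by
  apply NatTrans.ext; funext u
  haveI := hiso u
  have h1 := g.naturality (homOfLE (crit_le T u))
  have h2 := g'.naturality (homOfLE (crit_le T u))
  rw [← cancel_epi (V.map (homOfLE (crit_le T u))), h1, h2,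
    h (crit T u) (crit_mem T u)]

lemma exists_extension (V W : PersMod) (T : Finset ℝ≥0)
    (hiso : ∀ u, IsIso (V.map (homOfLE (crit_le T u))))
    (φ : ∀ t : ℝ≥0, V.obj t ⟶ W.obj t)
    (hcompat : ∀ t t', t ∈ insert 0 T → t' ∈ insert 0 T → ∀ (h : t ≤ t'),
      V.map (homOfLE h) ≫ φ t' = φ t ≫ W.map (homOfLE h)) :
    ∃ g : V ⟶ W, ∀ u, g.app u =
      inv (V.map (homOfLE (crit_le T u))) ≫ φ (crit T u) ≫ W.map (homOfLE (crit_le T u)) := by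
  haveI : ∀ u, IsIso (V.map (homOfLE (crit_le T u))) := hiso
  refine ⟨{ app := fun u => inv (V.map (homOfLE (crit_le T u))) ≫ φ (crit T u) ≫ W.map (homOfLE (crit_le T u)), naturality := ?_ }, fun u => rfl⟩
  intro u v f
  have huv : u ≤ v := leOfHom f
  have hab : crit T u ≤ crit T v := crit_mono T huv
  have hav : crit T u ≤ v := (crit_le T u).trans huv
  have step1 : V.map f ≫ inv (V.map (homOfLE (crit_le T v)))
      = inv (V.map (homOfLE (crit_le T u))) ≫ V.map (homOfLE hab) := by
    rw [IsIso.comp_inv_eq, Category.assoc, IsIso.eq_inv_comp,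
      pm_comp₂ V _ _ (homOfLE hav), pm_comp₂ V _ _ (homOfLE hav)]
  calc V.map f ≫ inv (V.map (homOfLE (crit_le T v))) ≫ φ (crit T v) ≫
        W.map (homOfLE (crit_le T v))
      = (V.map f ≫ inv (V.map (homOfLE (crit_le T v)))) ≫ φ (crit T v) ≫
        W.map (homOfLE (crit_le T v)) := by rw [Category.assoc]
    _ = (inv (V.map (homOfLE (crit_le T u))) ≫ V.map (homOfLE hab)) ≫ φ (crit T v) ≫
        W.map (homOfLE (crit_le T v)) := by rw [step1]
    _ = inv (V.map (homOfLE (crit_le T u))) ≫ (V.map (homOfLE hab) ≫ φ (crit T v)) ≫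
        W.map (homOfLE (crit_le T v)) := by simp only [Category.assoc]
    _ = inv (V.map (homOfLE (crit_le T u))) ≫ (φ (crit T u) ≫ W.map (homOfLE hab)) ≫
        W.map (homOfLE (crit_le T v)) := by
          rw [hcompat _ _ (crit_mem T u) (crit_mem T v) hab]
    _ = inv (V.map (homOfLE (crit_le T u))) ≫ φ (crit T u) ≫ (W.map (homOfLE hab) ≫
        W.map (homOfLE (crit_le T v))) := by simp only [Category.assoc]
    _ = inv (V.map (homOfLE (crit_le T u))) ≫ φ (crit T u) ≫ (W.map (homOfLE (crit_le T u)) ≫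
        W.map f) := by rw [pm_comp₂ W _ _ (homOfLE hav), pm_comp₂ W _ _ (homOfLE hav)]
    _ = (inv (V.map (homOfLE (crit_le T u))) ≫ φ (crit T u) ≫
        W.map (homOfLE (crit_le T u))) ≫ W.map f := by simp only [Category.assoc]

/-! ### Compactness from tameness and finite dimensionality -/

lemma isCompact_of_tame_fd (V : PersMod) (T : Finset ℝ≥0)
    (hT : ∀ (s u : ℝ≥0) (h : s ≤ u), (∀ r ∈ T, ¬(s < r ∧ r ≤ u)) →
      IsIso (V.map (homOfLE h)))
    (hfd : ∀ u : ℝ≥0, FiniteDimensional ℚ (V.obj u)) :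
    IsCompactObject V := by
  have hiso : ∀ u, IsIso (V.map (homOfLE (crit_le T u))) := crit_iso V T hT
  intro J _ _
  refine ⟨⟨fun {K} => ⟨fun {c} hc => ⟨?_⟩⟩⟩⟩
  refine Types.FilteredColimit.isColimitOf _ _ ?_ ?_
  · -- joint surjectivity
    intro η
    classical
    let η' : V ⟶ c.pt := η
    let B : ∀ t : ℝ≥0, Module.Basis (Fin (Module.finrank ℚ (V.obj t))) ℚ (V.obj t) :=
      fun t => letI := hfd t; Module.finBasis ℚ (V.obj t)
    -- Step 1: representatives for the images of all basis vectors at critical times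
    let L1 : List (J → Prop) := (insert 0 T).toList.flatMap (fun t =>
      (List.finRange (Module.finrank ℚ (V.obj t))).map (fun i => fun k : J =>
        ∃ y, (c.ι.app k).app t y = η'.app t (B t i)))
    have hstab1 : ∀ χ ∈ L1, ∀ {k k' : J}, (k ⟶ k') → χ k → χ k' := by
      intro χ hχ k k' f hk
      obtain ⟨t, ht, hm⟩ := List.mem_flatMap.1 hχ
      obtain ⟨i, _, rfl⟩ := List.mem_map.1 hm
      obtain ⟨y, hy⟩ := hk
      exact ⟨(K.map f).app t y, (cocone_w_app c f t y).trans hy⟩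
    have hex1 : ∀ χ ∈ L1, ∃ k, χ k := by
      intro χ hχ
      obtain ⟨t, ht, hm⟩ := List.mem_flatMap.1 hχ
      obtain ⟨i, _, rfl⟩ := List.mem_map.1 hm
      exact elt_exists_rep hc t (η'.app t (B t i))
    obtain ⟨j₀, hj₀⟩ := obj_sup L1 hstab1 hex1
    have hrep : ∀ t ∈ insert 0 T, ∀ i, ∃ y, (c.ι.app j₀).app t y = η'.app t (B t i) := by
      intro t ht i
      exact hj₀ _ (List.mem_flatMap.2 ⟨t, Finset.mem_toList.2 ht,
        List.mem_map.2 ⟨i, List.mem_finRange i, rfl⟩⟩)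
    -- Step 2: the factored maps at critical times
    let F0 : ∀ t : ℝ≥0, V.obj t ⟶ (K.obj j₀).obj t := fun t =>
      if ht : t ∈ insert 0 T then ModuleCat.ofHom ((B t).constr ℚ (fun i => (hrep t ht i).choose)) else 0
    have hF0 : ∀ t (ht : t ∈ insert 0 T), F0 t ≫ (c.ι.app j₀).app t = η'.app t := by
      intro t ht
      apply ModuleCat.hom_ext
      apply (B t).ext
      intro i
      show (c.ι.app j₀).app t (F0 t (B t i)) = η'.app t (B t i)
      have h1 : F0 t (B t i) = (hrep t ht i).choose := by
        show (if ht : t ∈ insert 0 T then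
          ModuleCat.ofHom ((B t).constr ℚ (fun i => (hrep t ht i).choose)) else 0) (B t i) = _
        rw [dif_pos ht]
        exact Module.Basis.constr_basis _ _ _ _
      rw [h1]
      exact (hrep t ht i).choose_spec
    -- Step 3: repair compatibilities at a further stage
    let L2 : List (∀ k : J, (j₀ ⟶ k) → Prop) := (insert 0 T).toList.flatMap (fun t =>
      (insert 0 T).toList.map (fun t' => fun k (f : j₀ ⟶ k) =>
        ∀ h : t ≤ t', (V.map (homOfLE h) ≫ F0 t') ≫ (K.map f).app t'
          = (F0 t ≫ (K.obj j₀).map (homOfLE h)) ≫ (K.map f).app t'))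
    have hstab2 : ∀ χ ∈ L2, ∀ {k k' : J} (f : j₀ ⟶ k) (g : k ⟶ k'), χ k f → χ k' (f ≫ g) := by
      intro χ hχ
      obtain ⟨t, ht, hm⟩ := List.mem_flatMap.1 hχ
      obtain ⟨t', ht', rfl⟩ := List.mem_map.1 hm
      intro k k' f g hk h
      exact K_comp_post K f g (hk h)
    have hex2 : ∀ χ ∈ L2, ∃ k f, χ k f := by
      intro χ hχ
      obtain ⟨t, ht, hm⟩ := List.mem_flatMap.1 hχ
      obtain ⟨t', ht', rfl⟩ := List.mem_map.1 hm
      have htm : t ∈ insert 0 T := Finset.mem_toList.1 ht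
      have htm' : t' ∈ insert 0 T := Finset.mem_toList.1 ht'
      by_cases h : t ≤ t'
      · haveI := hfd t
        have e1 : (K.obj j₀).map (homOfLE h) ≫ (c.ι.app j₀).app t'
            = (c.ι.app j₀).app t ≫ c.pt.map (homOfLE h) := (c.ι.app j₀).naturality _
        have e3 : V.map (homOfLE h) ≫ η'.app t' = η'.app t ≫ c.pt.map (homOfLE h) :=
          η'.naturality _
        have hpre : (V.map (homOfLE h) ≫ F0 t') ≫ (c.ι.app j₀).app t'
            = (F0 t ≫ (K.obj j₀).map (homOfLE h)) ≫ (c.ι.app j₀).app t' := by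
          calc (V.map (homOfLE h) ≫ F0 t') ≫ (c.ι.app j₀).app t'
              = V.map (homOfLE h) ≫ (F0 t' ≫ (c.ι.app j₀).app t') := by
                rw [Category.assoc]
            _ = V.map (homOfLE h) ≫ η'.app t' := by rw [hF0 t' htm']
            _ = η'.app t ≫ c.pt.map (homOfLE h) := e3
            _ = (F0 t ≫ (c.ι.app j₀).app t) ≫ c.pt.map (homOfLE h) := by rw [hF0 t htm]
            _ = F0 t ≫ ((c.ι.app j₀).app t ≫ c.pt.map (homOfLE h)) := by rw [Category.assoc]
            _ = F0 t ≫ ((K.obj j₀).map (homOfLE h) ≫ (c.ι.app j₀).app t') := by rw [e1]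
            _ = (F0 t ≫ (K.obj j₀).map (homOfLE h)) ≫ (c.ι.app j₀).app t' := by
                rw [Category.assoc]
        obtain ⟨k, f, hkf⟩ := lm_eventually_eq hc j₀ t' (V.obj t)
            (V.map (homOfLE h) ≫ F0 t') (F0 t ≫ (K.obj j₀).map (homOfLE h)) hpre
        exact ⟨k, f, fun h' => hkf⟩
      · exact ⟨j₀, 𝟙 j₀, fun h' => absurd h' h⟩
    obtain ⟨k, fk, hk2⟩ := hom_sup j₀ L2 hstab2 hex2
    -- Step 4: compatibility of the pushed maps
    have hcompat : ∀ t t', t ∈ insert 0 T → t' ∈ insert 0 T → ∀ h : t ≤ t',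
        V.map (homOfLE h) ≫ (F0 t' ≫ (K.map fk).app t')
          = (F0 t ≫ (K.map fk).app t) ≫ (K.obj k).map (homOfLE h) := by
      intro t t' ht ht' h
      have hc2 := hk2 _ (List.mem_flatMap.2 ⟨t, Finset.mem_toList.2 ht,
        List.mem_map.2 ⟨t', Finset.mem_toList.2 ht', rfl⟩⟩) h
      rw [← Category.assoc, hc2, Category.assoc, (K.map fk).naturality (homOfLE h),
        ← Category.assoc]
    have hψι : ∀ t (ht : t ∈ insert 0 T),
        (F0 t ≫ (K.map fk).app t) ≫ (c.ι.app k).app t = η'.app t := by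
      intro t ht
      have hw : (K.map fk).app t ≫ (c.ι.app k).app t = (c.ι.app j₀).app t := by
        rw [← NatTrans.comp_app, c.w fk]
      rw [Category.assoc, hw]
      exact hF0 t ht
    -- Step 5: extend to a natural transformation
    obtain ⟨g, hg⟩ := exists_extension V (K.obj k) T hiso
      (fun t => F0 t ≫ (K.map fk).app t) hcompat
    -- Step 6: the factorization
    refine ⟨k, g, ?_⟩
    show η' = g ≫ c.ι.app k
    apply NatTrans.ext; funext u
    haveI := hiso u
    have key : (g ≫ c.ι.app k).app u = η'.app u := by
      show g.app u ≫ (c.ι.app k).app u = η'.app u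
      have e1 : (K.obj k).map (homOfLE (crit_le T u)) ≫ (c.ι.app k).app u
          = (c.ι.app k).app (crit T u) ≫ c.pt.map (homOfLE (crit_le T u)) :=
        (c.ι.app k).naturality _
      have e3 : V.map (homOfLE (crit_le T u)) ≫ η'.app u
          = η'.app (crit T u) ≫ c.pt.map (homOfLE (crit_le T u)) := η'.naturality _
      calc g.app u ≫ (c.ι.app k).app u
          = (inv (V.map (homOfLE (crit_le T u))) ≫
              (F0 (crit T u) ≫ (K.map fk).app (crit T u)) ≫
              (K.obj k).map (homOfLE (crit_le T u))) ≫ (c.ι.app k).app u := by rw [hg u]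
        _ = inv (V.map (homOfLE (crit_le T u))) ≫
              (F0 (crit T u) ≫ (K.map fk).app (crit T u)) ≫
              ((K.obj k).map (homOfLE (crit_le T u)) ≫ (c.ι.app k).app u) := by
            simp only [Category.assoc]
        _ = inv (V.map (homOfLE (crit_le T u))) ≫
              (F0 (crit T u) ≫ (K.map fk).app (crit T u)) ≫
              ((c.ι.app k).app (crit T u) ≫ c.pt.map (homOfLE (crit_le T u))) := by rw [e1]
        _ = inv (V.map (homOfLE (crit_le T u))) ≫
              ((F0 (crit T u) ≫ (K.map fk).app (crit T u)) ≫
              (c.ι.app k).app (crit T u)) ≫ c.pt.map (homOfLE (crit_le T u)) := by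
            simp only [Category.assoc]
        _ = inv (V.map (homOfLE (crit_le T u))) ≫
              η'.app (crit T u) ≫ c.pt.map (homOfLE (crit_le T u)) := by
            rw [hψι (crit T u) (crit_mem T u)]
        _ = inv (V.map (homOfLE (crit_le T u))) ≫
              V.map (homOfLE (crit_le T u)) ≫ η'.app u := by rw [e3]
        _ = η'.app u := by rw [← Category.assoc, IsIso.inv_hom_id, Category.id_comp]
    exact key.symm
  · -- eventual injectivity
    intro i j gi gj hij
    classical
    have hij' : (gi : V ⟶ K.obj i) ≫ c.ι.app i = (gj : V ⟶ K.obj j) ≫ c.ι.app j := hij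
    have h₁ : (gi ≫ K.map (IsFiltered.leftToMax i j)) ≫ c.ι.app (IsFiltered.max i j)
        = (gj ≫ K.map (IsFiltered.rightToMax i j)) ≫ c.ι.app (IsFiltered.max i j) := by
      rw [Category.assoc, Category.assoc, c.w, c.w]
      exact hij'
    let L3 : List (∀ k : J, (IsFiltered.max i j ⟶ k) → Prop) :=
      (insert 0 T).toList.map (fun t => fun k (f : IsFiltered.max i j ⟶ k) =>
        (gi ≫ K.map (IsFiltered.leftToMax i j)).app t ≫ (K.map f).app t
          = (gj ≫ K.map (IsFiltered.rightToMax i j)).app t ≫ (K.map f).app t)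
    have hstab3 : ∀ χ ∈ L3, ∀ {k k' : J} (f : IsFiltered.max i j ⟶ k) (g : k ⟶ k'),
        χ k f → χ k' (f ≫ g) := by
      intro χ hχ
      obtain ⟨t, ht, rfl⟩ := List.mem_map.1 hχ
      intro k k' f g hk
      exact K_comp_post K f g hk
    have hex3 : ∀ χ ∈ L3, ∃ k f, χ k f := by
      intro χ hχ
      obtain ⟨t, ht, rfl⟩ := List.mem_map.1 hχ
      haveI := hfd t
      refine lm_eventually_eq hc (IsFiltered.max i j) t (V.obj t)
        ((gi ≫ K.map (IsFiltered.leftToMax i j)).app t)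
        ((gj ≫ K.map (IsFiltered.rightToMax i j)).app t) ?_
      have := congrArg (fun (α : V ⟶ c.pt) => α.app t) h₁
      exact this
    obtain ⟨k, f, hk3⟩ := hom_sup _ L3 hstab3 hex3
    refine ⟨k, IsFiltered.leftToMax i j ≫ f, IsFiltered.rightToMax i j ≫ f, ?_⟩
    show gi ≫ K.map (IsFiltered.leftToMax i j ≫ f) = gj ≫ K.map (IsFiltered.rightToMax i j ≫ f)
    rw [K.map_comp, K.map_comp, ← Category.assoc, ← Category.assoc]
    apply ext_at_crit V (K.obj k) T hiso
    intro t ht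
    exact hk3 _ (List.mem_map.2 ⟨t, Finset.mem_toList.2 ht, rfl⟩)


/-- A persistence module `V` is a compact object of `pVec` iff `V` is
tame and of finite type, i.e. `V(u)` is a finite-dimensional `ℚ`-vector space for
every `u ≥ 0`. -/
theorem isCompact_persMod_iff (V : PersMod) :
    IsCompactObject V ↔
      TameFunctor V ∧ ∀ u : ℝ≥0, FiniteDimensional ℚ (V.obj u) := by
  constructor
  · intro h
    exact ⟨tame_of_isCompact V h, finiteDimensional_of_isCompact V h⟩
  · rintro ⟨⟨T, hT⟩, hfd⟩
    exact isCompact_of_tame_fd V T hT hfd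

end Pers
end
end
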